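/- Let G = (V,E) be a finite simple graph, k ≥ 1 an integer, v a large-sparse vertex of G, and B ⊆ V \ {v}. Suppose at least k+1 connected components of G − ({v} ∪ B) each contain a cycle and contain at least one neighbor of v. Then every feasible solution for (G,k) contains v. -/

import Mathlib

open SimpleGraph

/-- The number of edges of `G` with both endpoints in the neighborhood of `v`. -/
noncomputable def rho {V : Type*} (G : SimpleGraph V) (v : V) : ℕ :=
  {e : Sym2 V | e ∈ G.edgeSet ∧ ∀ x ∈ e, G.Adj v x}.ncard

/-- `v` is large-sparse: `|N(v)| > 7k` and `ρ(v) ≤ |N(v)|(|N(v)|−1)/4`. -/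
def LargeSparse {V : Type*} (G : SimpleGraph V) (k : ℕ) (v : V) : Prop :=
  7 * k < (G.neighborSet v).ncard ∧
    4 * rho G v ≤ (G.neighborSet v).ncard * ((G.neighborSet v).ncard - 1)

/-- `v` is large-dense: `|N(v)| > 7k` and `ρ(v) > |N(v)|(|N(v)|−1)/4`. -/
def LargeDense {V : Type*} (G : SimpleGraph V) (k : ℕ) (v : V) : Prop :=
  7 * k < (G.neighborSet v).ncard ∧
    (G.neighborSet v).ncard * ((G.neighborSet v).ncard - 1) < 4 * rho G v

/-- The connected component `c` of `H` is a clique. -/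
def CompIsClique {W : Type*} (H : SimpleGraph W) (c : H.ConnectedComponent) : Prop :=
  H.IsClique c.supp

/-- The connected component `c` of `H` is a tree. -/
def CompIsTree {W : Type*} (H : SimpleGraph W) (c : H.ConnectedComponent) : Prop :=
  (H.induce c.supp).IsTree

/-- Every connected component of `H` is a clique or a tree. -/
def CliquesOrTrees {W : Type*} (H : SimpleGraph W) : Prop :=
  ∀ c : H.ConnectedComponent, CompIsClique H c ∨ CompIsTree H c

/-- `X` is a feasible solution for `(G, k)`: `|X| ≤ k` and every connected component of
`G − X` is a clique or a tree. -/
def IsFeasible {V : Type*} (G : SimpleGraph V) (k : ℕ) (X : Set V) : Prop :=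
  X.ncard ≤ k ∧ CliquesOrTrees (G.induce (Xᶜ : Set V))

/-- if `v` is large-sparse, `B ⊆ V \ {v}`, and at least `k+1` connected
components of `G − ({v} ∪ B)` each contain a cycle and contain a neighbor of `v`, then
every feasible solution for `(G,k)` contains `v`. -/
lemma walk_induce_reachable {V : Type*} {G : SimpleGraph V} {A B : Set V} {a b : A}
    (p : (G.induce A).Walk a b)
    (hs : ∀ x ∈ p.support, (x : V) ∈ B) (ha : (a : V) ∈ B) (hb : (b : V) ∈ B) :
    (G.induce B).Reachable ⟨a, ha⟩ ⟨b, hb⟩ := by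
  induction p with
  | nil => exact Reachable.refl _
  | @cons x y z h q ih =>
      refine (Adj.reachable ?_).trans
        (ih (fun w hw => hs w (by simp [hw])) (hs _ (by simp)) hb)
      exact h

theorem stmt_5 {V : Type*} [Fintype V] (G : SimpleGraph V) (k : ℕ) (hk : 1 ≤ k) (v : V)
    (hv : LargeSparse G k v) (B : Set V) (hvB : v ∉ B)
    (𝒞 : Set (G.induce (({v} ∪ B)ᶜ : Set V)).ConnectedComponent)
    (h𝒞card : k + 1 ≤ 𝒞.ncard)
    (h𝒞cyc : ∀ c ∈ 𝒞, ¬ ((G.induce (({v} ∪ B)ᶜ : Set V)).induce c.supp).IsAcyclic)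
    (h𝒞nbr : ∀ c ∈ 𝒞, ∃ u ∈ c.supp, G.Adj v (u : V))
    (X : Set V) (hX : IsFeasible G k X) :
    v ∈ X := by
  classical
  by_contra hvX
  -- pigeonhole: some component in 𝒞 is disjoint from X
  obtain ⟨c, hc𝒞, hcX⟩ : ∃ c ∈ 𝒞, ∀ x ∈ c.supp, (x : V) ∉ X := by
    by_contra hcon
    push_neg at hcon
    choose f hf1 hf2 using hcon
    have hle : 𝒞.ncard ≤ X.ncard := by
      refine Set.ncard_le_ncard_of_injOn (fun c => if h : c ∈ 𝒞 then (f c h : V) else v)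
        (fun c hc => by rw [dif_pos hc]; exact hf2 c hc) ?_ X.toFinite
      intro c1 h1 c2 h2 heq
      simp only [h1, h2, dif_pos] at heq
      have : f c1 h1 = f c2 h2 := Subtype.ext heq
      have m1 := hf1 c1 h1
      have m2 := hf1 c2 h2
      rw [this] at m1
      rw [SimpleGraph.ConnectedComponent.mem_supp_iff] at m1 m2
      exact m1.symm.trans m2
    have := hX.1
    omega
  -- the cycle in component c
  have hcyc := h𝒞cyc c hc𝒞
  rw [SimpleGraph.IsAcyclic] at hcyc
  push_neg at hcyc
  obtain ⟨a, p, hp⟩ := hcyc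
  obtain ⟨u, hu, hadj⟩ := h𝒞nbr c hc𝒞
  have hvXc : v ∈ (Xᶜ : Set V) := hvX
  set K := (G.induce (Xᶜ : Set V)).connectedComponentMk ⟨v, hvXc⟩ with hK
  -- every vertex of c.supp lies (as a vertex of G.induce Xᶜ) in K.supp
  have hmem : ∀ (x : (({v} ∪ B)ᶜ : Set V)), x ∈ c.supp → ∀ (h : (x : V) ∈ (Xᶜ : Set V)),
      (⟨(x : V), h⟩ : (Xᶜ : Set V)) ∈ K.supp := by
    intro x hx h
    rw [SimpleGraph.ConnectedComponent.mem_supp_iff, hK, SimpleGraph.ConnectedComponent.eq]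
    rw [SimpleGraph.ConnectedComponent.mem_supp_iff] at hx hu
    have hreach : (G.induce (({v} ∪ B)ᶜ : Set V)).Reachable u x := by
      rw [← SimpleGraph.ConnectedComponent.eq, hx, hu]
    obtain ⟨q⟩ := hreach
    have hsupp : ∀ y ∈ q.support, (y : V) ∈ (Xᶜ : Set V) := by
      intro y hy
      have : y ∈ c.supp := by
        rw [SimpleGraph.ConnectedComponent.mem_supp_iff, ← hu,
          SimpleGraph.ConnectedComponent.eq]
        exact ((q.takeUntil y hy).reachable).symm
      exact hcX y this
    have hr := walk_induce_reachable q hsupp (hsupp _ q.start_mem_support) h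
    have hadj' : (G.induce (Xᶜ : Set V)).Adj ⟨v, hvXc⟩ ⟨(u : V), hsupp _ q.start_mem_support⟩ :=
      hadj
    exact (hr.symm.trans hadj'.reachable.symm)
  -- K is not a tree: map the cycle into the induced graph on K.supp
  have hKnottree : ¬ CompIsTree (G.induce (Xᶜ : Set V)) K := by
    intro ht
    have hacyc := IsTree.IsAcyclic ht
    -- build hom from H.induce c.supp into (G.induce Xᶜ).induce K.supp
    have hXc : ∀ x : c.supp, ((x : (({v} ∪ B)ᶜ : Set V)) : V) ∈ (Xᶜ : Set V) := fun x => hcX _ x.2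
    let φ : ((G.induce (({v} ∪ B)ᶜ : Set V)).induce c.supp) →g ((G.induce (Xᶜ : Set V)).induce K.supp) :=
      { toFun := fun x => ⟨⟨((x : (({v} ∪ B)ᶜ : Set V)) : V), hXc x⟩, hmem x x.2 (hXc x)⟩,
        map_rel' := fun {x y} h => h }
    have hinj : Function.Injective φ := by
      intro x y h
      have h1 := Subtype.ext_iff.mp (Subtype.ext_iff.mp h)
      exact Subtype.ext (Subtype.ext h1)
    exact hacyc (p.map φ) (hp.map hinj)
  have hKclique : CompIsClique (G.induce (Xᶜ : Set V)) K := (hX.2 K).resolve_right hKnottree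
  -- all neighbors of v outside X are in K.supp
  have hnbrK : ∀ (w : V) (hw : w ∈ G.neighborSet v) (h : w ∈ (Xᶜ : Set V)),
      (⟨w, h⟩ : (Xᶜ : Set V)) ∈ K.supp := by
    intro w hw h
    rw [SimpleGraph.ConnectedComponent.mem_supp_iff, hK, SimpleGraph.ConnectedComponent.eq]
    have : (G.induce (Xᶜ : Set V)).Adj ⟨w, h⟩ ⟨v, hvXc⟩ := hw.symm
    exact this.reachable
  -- counting
  set n := (G.neighborSet v).ncard with hn
  set T : Finset V := ((G.neighborSet v) \ X).toFinset with hT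
  have hTcard : n ≤ T.card + k := by
    have h1 : (G.neighborSet v).ncard ≤ ((G.neighborSet v) \ X).ncard + X.ncard := by
      refine le_trans (Set.ncard_le_ncard (by intro x hx; by_cases h : x ∈ X <;> simp [hx, h])
        ((((G.neighborSet v) \ X).toFinite).union X.toFinite)) (Set.ncard_union_le _ _)
    have h2 : ((G.neighborSet v) \ X).ncard = T.card := by
      rw [hT, Set.ncard_eq_toFinset_card']
    have := hX.1
    omega
  -- each pair of distinct elements of T gives an edge counted by rho
  have hsub : ((T.offDiag.image Sym2.mk.uncurry : Finset (Sym2 V)) : Set (Sym2 V)) ⊆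
      {e : Sym2 V | e ∈ G.edgeSet ∧ ∀ x ∈ e, G.Adj v x} := by
    intro e he
    simp only [Finset.coe_image, Set.mem_image, Finset.mem_coe, Finset.mem_offDiag] at he
    obtain ⟨⟨x, y⟩, ⟨hx, hy, hxy⟩, rfl⟩ := he
    rw [hT, Set.mem_toFinset] at hx hy
    have hxX : x ∈ (Xᶜ : Set V) := hx.2
    have hyX : y ∈ (Xᶜ : Set V) := hy.2
    have hxK := hnbrK x hx.1 hxX
    have hyK := hnbrK y hy.1 hyX
    have hne : (⟨x, hxX⟩ : (Xᶜ : Set V)) ≠ ⟨y, hyX⟩ := fun h => hxy (congrArg Subtype.val h)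
    have hadj : (G.induce (Xᶜ : Set V)).Adj ⟨x, hxX⟩ ⟨y, hyX⟩ := hKclique hxK hyK hne
    have hGadj : G.Adj x y := hadj
    refine ⟨hGadj, ?_⟩
    intro z hz
    rw [Function.uncurry_apply_pair, Sym2.mem_iff] at hz
    rcases hz with rfl | rfl
    · exact hx.1
    · exact hy.1
  have hrho : (T.offDiag.image Sym2.mk.uncurry).card ≤ rho G v := by
    rw [rho, ← Set.ncard_coe_finset]
    exact Set.ncard_le_ncard hsub (Set.toFinite _)
  have h2m : 2 * (T.offDiag.image Sym2.mk.uncurry).card = T.card * T.card - T.card := by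
    rw [Sym2.two_mul_card_image_offDiag, Finset.offDiag_card]
  -- arithmetic contradiction
  have h7k : 7 * k < n := hv.1
  have hρ : 4 * rho G v ≤ n * (n - 1) := hv.2
  have hm : 6 * k + 1 ≤ T.card := by omega
  have h4 : 2 * (T.card * T.card - T.card) ≤ 4 * rho G v := by omega
  have hTn : T.card * (T.card - 1) = T.card * T.card - T.card := by
    cases T.card with
    | zero => simp
    | succ m => simp [Nat.succ_sub_one, Nat.mul_sub, Nat.mul_comm]; ring_nf; omega
  nlinarith [hTcard, hm, h7k, Nat.sub_add_cancel (show 1 ≤ n by omega),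
    Nat.sub_add_cancel (show 1 ≤ T.card by omega), h4, hρ, h2m]
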